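/- Let A be an n×n symmetric matrix over Z[√2] whose associated weighted graph is connected, all of whose diagonal entries lie in Z, and all of whose eigenvalues together with those of its Galois conjugate σ(A) lie in [−2, 2], where σ sends √2 to −√2 entrywise. If every cycle of the underlying graph contains an even number of edges of weight ±√2, then A is switch-equivalent to σ(A), i.e., there is a diagonal ±1 matrix D and a permutation matrix P such that σ(A) = (DP) A (DP)ᵀ, and consequently the characteristic polynomial of A has integer coefficients. -/

import Mathlib

open Matrix

lemma sq2_irr {p q : ℤ} (h : (p:ℝ) + q * Real.sqrt 2 = 0) : p = 0 ∧ q = 0 := by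
  by_cases hq : q = 0
  · subst hq; constructor <;> [skip; rfl]
    have : (p:ℝ) = 0 := by simpa using h
    exact_mod_cast this
  · exfalso
    have h2 : Real.sqrt 2 = ((-p / q : ℚ) : ℝ) := by
      have hq' : (q:ℝ) ≠ 0 := Int.cast_ne_zero.2 hq
      push_cast
      field_simp
      linarith [h]
    exact irrational_sqrt_two ⟨_, h2.symm⟩

lemma sq2_uniq {p q r s : ℤ} (h : (p:ℝ) + q * Real.sqrt 2 = r + s * Real.sqrt 2) :
    p = r ∧ q = s := by
  have := sq2_irr (p := p - r) (q := q - s) (by push_cast; ring_nf; ring_nf at h; linarith)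
  omega

lemma classify {α β : ℤ} (h1 : |(α:ℝ) + β * Real.sqrt 2| ≤ 2)
    (h2 : |(α:ℝ) - β * Real.sqrt 2| ≤ 2) :
    β = 0 ∨ (α = 0 ∧ (β = 1 ∨ β = -1)) := by
  have hs : Real.sqrt 2 * Real.sqrt 2 = 2 := Real.mul_self_sqrt (by norm_num)
  have hs1 : (1:ℝ) < Real.sqrt 2 := by nlinarith [Real.sqrt_nonneg 2]
  have hs2 : Real.sqrt 2 < 1.5 := by nlinarith [Real.sqrt_nonneg 2]
  rw [abs_le] at h1 h2
  have hb : |(β:ℝ)| ≤ Real.sqrt 2 := by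
    rw [abs_le]; constructor <;> nlinarith
  have hb' : β = 0 ∨ β = 1 ∨ β = -1 := by
    have : |(β:ℝ)| < 2 := by linarith
    rw [abs_lt] at this
    have l1 : (-2:ℝ) < β := this.1
    have l2 : (β:ℝ) < 2 := this.2
    have l1' : (-2:ℤ) < β := by exact_mod_cast l1
    have l2' : β < 2 := by exact_mod_cast l2
    omega
  rcases hb' with h | h | h
  · exact Or.inl h
  · refine Or.inr ⟨?_, Or.inl h⟩
    subst h
    have : |(α:ℝ)| < 1 := by
      rw [abs_lt]; push_cast at h1 h2 ⊢; constructor <;> nlinarith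
    rw [abs_lt] at this
    have l1 : (-1:ℝ) < α := this.1
    have l2 : (α:ℝ) < 1 := this.2
    have l1' : (-1:ℤ) < α := by exact_mod_cast l1
    have l2' : α < 1 := by exact_mod_cast l2
    omega
  · refine Or.inr ⟨?_, Or.inr h⟩
    subst h
    have : |(α:ℝ)| < 1 := by
      rw [abs_lt]; push_cast at h1 h2 ⊢; constructor <;> nlinarith
    rw [abs_lt] at this
    have l1 : (-1:ℝ) < α := this.1
    have l2 : (α:ℝ) < 1 := this.2
    have l1' : (-1:ℤ) < α := by exact_mod_cast l1
    have l2' : α < 1 := by exact_mod_cast l2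
    omega

lemma symm_herm {n : ℕ} (A : Matrix (Fin n) (Fin n) ℝ) (h : A.IsSymm) : A.IsHermitian := by
  rwa [Matrix.IsHermitian, conjTranspose_eq_transpose_of_trivial]

lemma entry_bound {n : ℕ} (A : Matrix (Fin n) (Fin n) ℝ) (hA : A.IsHermitian)
    (h : ∀ μ ∈ spectrum ℝ A, μ ∈ Set.Icc (-2:ℝ) 2) (i j : Fin n) : |A i j| ≤ 2 := by
  classical
  set U : Matrix (Fin n) (Fin n) ℝ := (hA.eigenvectorUnitary : Matrix (Fin n) (Fin n) ℝ) with hU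
  have hspec : A = U * diagonal (RCLike.ofReal ∘ hA.eigenvalues) * star U := hA.spectral_theorem
  have hstar : star U = Uᵀ := by
    rw [Matrix.star_eq_conjTranspose, conjTranspose_eq_transpose_of_trivial]
  have hentry : A i j = ∑ k, hA.eigenvalues k * U i k * U j k := by
    conv_lhs => rw [hspec]
    rw [hstar, Matrix.mul_apply]
    apply Finset.sum_congr rfl
    intro k _
    rw [Matrix.mul_diagonal, transpose_apply]
    simp only [Function.comp_apply, RCLike.ofReal_real_eq_id, id_eq]
    ring
  have hrow : ∀ i : Fin n, ∑ k, U i k ^ 2 = 1 := by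
    intro i
    have h1 : U * star U = 1 := Matrix.mem_unitaryGroup_iff.mp hA.eigenvectorUnitary.2
    have := congrArg (fun M => M i i) h1
    simp [Matrix.mul_apply, hstar, Matrix.one_apply, sq] at this ⊢
    convert this using 2
  have heig : ∀ k, |hA.eigenvalues k| ≤ 2 := by
    intro k
    have := h _ (hA.eigenvalues_mem_spectrum_real k)
    rw [abs_le]; exact ⟨this.1, this.2⟩
  have CS : ∑ k, |U i k| * |U j k| ≤ 1 := by
    have h2 : (∑ k, |U i k| * |U j k|) ^ 2 ≤ (∑ k, |U i k| ^ 2) * ∑ k, |U j k| ^ 2 :=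
      Finset.sum_mul_sq_le_sq_mul_sq _ _ _
    have e1 : (∑ k, |U i k| ^ 2) = 1 := by simpa [sq_abs] using hrow i
    have e2 : (∑ k, |U j k| ^ 2) = 1 := by simpa [sq_abs] using hrow j
    rw [e1, e2, mul_one] at h2
    nlinarith [Finset.sum_nonneg (fun k (_ : k ∈ Finset.univ) => mul_nonneg (abs_nonneg (U i k)) (abs_nonneg (U j k)))]
  calc |A i j| = |∑ k, hA.eigenvalues k * U i k * U j k| := by rw [hentry]
    _ ≤ ∑ k, |hA.eigenvalues k * U i k * U j k| := Finset.abs_sum_le_sum_abs _ _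
    _ ≤ ∑ k, 2 * (|U i k| * |U j k|) := by
        apply Finset.sum_le_sum
        intro k _
        rw [abs_mul, abs_mul, mul_assoc]
        exact mul_le_mul_of_nonneg_right (heig k)
          (mul_nonneg (abs_nonneg _) (abs_nonneg _))
    _ = 2 * ∑ k, |U i k| * |U j k| := by rw [Finset.mul_sum]
    _ ≤ 2 * 1 := by linarith [CS]
    _ = 2 := by norm_num

lemma closed_par {n : ℕ} (A : Matrix (Fin n) (Fin n) ℝ) (s : Fin n → Fin n → ZMod 2)
    (hss : ∀ i j, s i j = s j i) (hsd : ∀ i, s i i = 0)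
    (hP : ∀ i j, s i j = if (A i j = Real.sqrt 2 ∨ A i j = -Real.sqrt 2) then 1 else 0)
    (hcyc : ∀ (k : ℕ) (c : Fin (k + 1) → Fin n), 3 ≤ k →
      c 0 = c (Fin.last k) →
      Function.Injective (fun l : Fin k => c l.castSucc) →
      (∀ l : Fin k, A (c l.castSucc) (c l.succ) ≠ 0) →
      Even (Nat.card {l : Fin k // A (c l.castSucc) (c l.succ) = Real.sqrt 2 ∨
        A (c l.castSucc) (c l.succ) = -Real.sqrt 2}))
    (k : ℕ) :
    ∀ c : ℕ → Fin n, c 0 = c k → (∀ l < k, A (c l) (c (l + 1)) ≠ 0) →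
      ∑ l ∈ Finset.range k, s (c l) (c (l + 1)) = 0 := by
  induction k using Nat.strong_induction_on with
  | _ k IH =>
  intro c hc hadj
  by_cases hinj : ∀ l1 l2, l1 < l2 → l2 < k → c l1 ≠ c l2
  · -- no repeated vertex among c 0 .. c (k-1)
    have h2 : ∀ x : ZMod 2, x + x = 0 := by decide
    rcases k with _ | (_ | (_ | m))
    · exact Finset.sum_range_zero _
    · rw [show (0+1 : ℕ) = 1 from rfl, Finset.sum_range_one]
      rw [show c 1 = c 0 from hc.symm, hsd]
    · rw [show (0+1+1 : ℕ) = 2 from rfl, Finset.sum_range_succ, Finset.sum_range_one]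
      norm_num
      rw [show c 2 = c 0 from hc.symm, hss (c 1) (c 0)]
      exact h2 _
    · 
      set K := m + 3 with hK
      set cF : Fin (K+1) → Fin n := fun l => c l.val with hcF
      have h0 : cF 0 = c 0 := rfl
      have heven := hcyc K cF (by omega)
        (by rw [h0, hc]; rfl)
        (by
          intro x y hxy
          simp only [hcF, Fin.coe_castSucc] at hxy
          by_contra hne
          have hne' : (x : ℕ) ≠ (y : ℕ) := fun h => hne (Fin.ext h)
          rcases lt_or_gt_of_ne hne' with h | h
          · exact hinj x y h y.isLt hxy
          · exact hinj y x h x.isLt hxy.symm)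
        (by
          intro l
          have := hadj l.val l.isLt
          simpa [hcF] using this)
      -- convert to sum
      have hsum : ∑ l ∈ Finset.range K, s (c l) (c (l + 1)) =
          ∑ l : Fin K, s (cF l.castSucc) (cF l.succ) := by
        rw [← Fin.sum_univ_eq_sum_range]
        rfl
      rw [hsum]
      have : ∀ l : Fin K, s (cF l.castSucc) (cF l.succ) =
          if (A (cF l.castSucc) (cF l.succ) = Real.sqrt 2 ∨
            A (cF l.castSucc) (cF l.succ) = -Real.sqrt 2) then 1 else 0 := fun l => hP _ _
      rw [Finset.sum_congr rfl fun l _ => this l]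
      classical
      rw [Finset.sum_boole]
      obtain ⟨t, ht⟩ := heven
      rw [Nat.card_eq_fintype_card, Fintype.card_subtype] at ht
      rw [show (Finset.filter _ Finset.univ).card = t + t from ht]
      push_cast
      exact h2 _
  · push_neg at hinj
    obtain ⟨l1, l2, h12, h2k, hcc⟩ := hinj
    set d := l2 - l1 with hd
    have hld : l1 + d = l2 := by omega
    -- inner walk
    set c1 : ℕ → Fin n := fun m => c (l1 + m) with hc1
    have hin : ∑ l ∈ Finset.range d, s (c1 l) (c1 (l + 1)) = 0 := by
      apply IH d (by omega) c1
      · show c (l1 + 0) = c (l1 + d)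
        rw [hld, Nat.add_zero, hcc]
      · intro l hl
        have : l1 + (l + 1) = (l1 + l) + 1 := by omega
        simp only [hc1, this]
        exact hadj (l1 + l) (by omega)
    -- outer walk
    set c2 : ℕ → Fin n := fun m => if m < l1 then c m else c (m + d) with hc2
    have hc2low : ∀ m ≤ l1, c2 m = c m := by
      intro m hm
      rcases lt_or_eq_of_le hm with h | h
      · simp [hc2, h]
      · subst h
        simp only [hc2, lt_irrefl, if_neg (lt_irrefl m)]
        rw [hld, ← hcc]
    have hc2high : ∀ m, l1 ≤ m → c2 m = c (m + d) := by
      intro m hm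
      simp [hc2, Nat.not_lt.mpr hm]
    have hout : ∑ l ∈ Finset.range (k - d), s (c2 l) (c2 (l + 1)) = 0 := by
      apply IH (k - d) (by omega) c2
      · rw [hc2low 0 (by omega), hc2high (k - d) (by omega),
          show k - d + d = k from by omega, hc]
      · intro l hl
        rcases Nat.lt_or_ge l l1 with h | h
        · rw [hc2low l (by omega), hc2low (l+1) (by omega)]
          exact hadj l (by omega)
        · rw [hc2high l h, hc2high (l+1) (by omega),
            show l + 1 + d = (l + d) + 1 from by omega]
          exact hadj (l + d) (by omega)
    -- combine
    have hsplit : ∑ l ∈ Finset.range k, s (c l) (c (l + 1)) =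
        (∑ l ∈ Finset.range (k - d), s (c2 l) (c2 (l + 1))) +
        (∑ l ∈ Finset.range d, s (c1 l) (c1 (l + 1))) := by
      have e1 : ∑ l ∈ Finset.range k, s (c l) (c (l + 1)) =
          (∑ l ∈ Finset.Ico 0 l1, s (c l) (c (l + 1))) +
          (∑ l ∈ Finset.Ico l1 l2, s (c l) (c (l + 1))) +
          (∑ l ∈ Finset.Ico l2 k, s (c l) (c (l + 1))) := by
        rw [Finset.sum_Ico_consecutive _ (by omega : 0 ≤ l1) (by omega : l1 ≤ l2),
          Finset.sum_Ico_consecutive _ (by omega : 0 ≤ l2) (by omega : l2 ≤ k)]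
        rw [Finset.range_eq_Ico]
      have e2 : ∑ l ∈ Finset.range (k - d), s (c2 l) (c2 (l + 1)) =
          (∑ l ∈ Finset.Ico 0 l1, s (c l) (c (l + 1))) +
          (∑ l ∈ Finset.Ico l2 k, s (c l) (c (l + 1))) := by
        have e2a : ∑ l ∈ Finset.Ico 0 l1, s (c2 l) (c2 (l + 1)) =
            ∑ l ∈ Finset.Ico 0 l1, s (c l) (c (l + 1)) := by
          apply Finset.sum_congr rfl
          intro l hl
          simp only [Finset.mem_Ico] at hl
          rw [hc2low l (by omega), hc2low (l+1) (by omega)]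
        have e2b : ∑ l ∈ Finset.Ico l1 (k - d), s (c2 l) (c2 (l + 1)) =
            ∑ l ∈ Finset.Ico l2 k, s (c l) (c (l + 1)) := by
          rw [Finset.sum_Ico_eq_sum_range, Finset.sum_Ico_eq_sum_range]
          rw [show k - d - l1 = k - l2 from by omega]
          apply Finset.sum_congr rfl
          intro m hm
          simp only [Finset.mem_range] at hm
          rw [hc2high (l1 + m) (by omega), hc2high (l1 + m + 1) (by omega),
            show l1 + m + d = l2 + m from by omega,
            show l1 + m + 1 + d = l2 + m + 1 from by omega]
        rw [← e2a, ← e2b, Finset.range_eq_Ico,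
          Finset.sum_Ico_consecutive _ (by omega : 0 ≤ l1) (by omega : l1 ≤ k - d)]
      have e3 : ∑ l ∈ Finset.range d, s (c1 l) (c1 (l + 1)) =
          ∑ l ∈ Finset.Ico l1 l2, s (c l) (c (l + 1)) := by
        rw [Finset.sum_Ico_eq_sum_range, show l2 - l1 = d from rfl]
        apply Finset.sum_congr rfl
        intro m hm
        simp only [hc1, show ∀ m, l1 + (m + 1) = l1 + m + 1 from fun m => by omega]
      rw [e1, e2, e3]
      ring
    rw [hsplit, hin, hout, add_zero]

/-- Let `A` be a connected symmetric matrix over `ℤ[√2]` (entries `a i j + b i j * √2`)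
with integer diagonal entries, all of whose eigenvalues, together with those of its
entrywise Galois conjugate `σ(A)` (with `√2 ↦ -√2`), lie in `[-2, 2]`.  If every cycle of
the underlying graph contains an even number of edges of weight `±√2`, then `A` is
switch-equivalent to `σ(A)`, i.e. `σ(A) = (D P) A (D P)ᵀ` for some diagonal `±1` matrix
`D` and permutation matrix `P`; consequently the characteristic polynomial of `A` has
integer coefficients. -/
theorem stmt19 (n : ℕ) (A : Matrix (Fin n) (Fin n) ℝ)
    (a b : Fin n → Fin n → ℤ)
    (hab : ∀ i j, A i j = (a i j : ℝ) + (b i j : ℝ) * Real.sqrt 2)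
    (hsym : A.IsSymm)
    (hdiag : ∀ i, b i i = 0)
    (hspec : ∀ μ ∈ spectrum ℝ A, μ ∈ Set.Icc (-2 : ℝ) 2)
    (hspecσ : ∀ μ ∈ spectrum ℝ
      (Matrix.of fun i j : Fin n => (a i j : ℝ) - (b i j : ℝ) * Real.sqrt 2),
      μ ∈ Set.Icc (-2 : ℝ) 2)
    (hconn : ∀ i j : Fin n, ∃ (k : ℕ) (c : Fin (k + 1) → Fin n),
      c 0 = i ∧ c (Fin.last k) = j ∧ ∀ l : Fin k, A (c l.castSucc) (c l.succ) ≠ 0)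
    (hcyc : ∀ (k : ℕ) (c : Fin (k + 1) → Fin n), 3 ≤ k →
      c 0 = c (Fin.last k) →
      Function.Injective (fun l : Fin k => c l.castSucc) →
      (∀ l : Fin k, A (c l.castSucc) (c l.succ) ≠ 0) →
      Even (Nat.card {l : Fin k // A (c l.castSucc) (c l.succ) = Real.sqrt 2 ∨
        A (c l.castSucc) (c l.succ) = -Real.sqrt 2})) :
    (∃ (ε : Fin n → ℝ) (p : Equiv.Perm (Fin n)),
      (∀ i, ε i = 1 ∨ ε i = -1) ∧
      (Matrix.of fun i j : Fin n => (a i j : ℝ) - (b i j : ℝ) * Real.sqrt 2) =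
        (Matrix.diagonal ε * Matrix.of (fun i j : Fin n => if p i = j then (1 : ℝ) else 0))
          * A *
        (Matrix.diagonal ε * Matrix.of (fun i j : Fin n => if p i = j then (1 : ℝ) else 0))ᵀ) ∧
    (∀ k, ∃ m : ℤ, A.charpoly.coeff k = (m : ℝ)) := by
  classical
  have hs2 : Real.sqrt 2 * Real.sqrt 2 = 2 := Real.mul_self_sqrt (by norm_num)
  have hs2pos : 0 < Real.sqrt 2 := Real.sqrt_pos.mpr (by norm_num)
  have h2 : ∀ x : ZMod 2, x + x = 0 := by decide
  set σA : Matrix (Fin n) (Fin n) ℝ :=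
    Matrix.of (fun i j : Fin n => (a i j : ℝ) - (b i j : ℝ) * Real.sqrt 2) with hσAdef
  have hσA_apply : ∀ i j, σA i j = (a i j : ℝ) - (b i j : ℝ) * Real.sqrt 2 := fun i j => rfl
  have hA_symm : ∀ i j, A j i = A i j := by
    intro i j
    conv_rhs => rw [← hsym]
    rfl
  have hab_symm : ∀ i j, a j i = a i j ∧ b j i = b i j := by
    intro i j
    have h := hA_symm i j
    rw [hab, hab] at h
    exact sq2_uniq h
  have hσsymm : σA.IsSymm := by
    ext i j
    show σA j i = σA i j
    rw [hσA_apply, hσA_apply, (hab_symm i j).1, (hab_symm i j).2]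
  have hb1 : ∀ i j, |A i j| ≤ 2 := entry_bound A (symm_herm A hsym) hspec
  have hb2 : ∀ i j, |σA i j| ≤ 2 := entry_bound σA (symm_herm σA hσsymm) hspecσ
  have hclass : ∀ i j, b i j = 0 ∨ (a i j = 0 ∧ (b i j = 1 ∨ b i j = -1)) := by
    intro i j
    refine classify ?_ ?_
    · rw [← hab]; exact hb1 i j
    · rw [← hσA_apply]; exact hb2 i j
  set s : Fin n → Fin n → ZMod 2 := fun i j => if b i j = 0 then 0 else 1 with hsdef
  have hss : ∀ i j, s i j = s j i := by
    intro i j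
    simp only [hsdef]
    rw [(hab_symm i j).2]
  have hsd : ∀ i, s i i = 0 := by intro i; simp [hsdef, hdiag i]
  have hP : ∀ i j, s i j = if (A i j = Real.sqrt 2 ∨ A i j = -Real.sqrt 2) then 1 else 0 := by
    intro i j
    by_cases h : A i j = Real.sqrt 2 ∨ A i j = -Real.sqrt 2
    · rw [if_pos h]
      simp only [hsdef]
      rw [if_neg]
      intro hb0
      rcases h with h | h
      · rw [hab, hb0] at h
        have := sq2_irr (p := a i j) (q := -1) (by push_cast; push_cast at h; linarith)
        omega
      · rw [hab, hb0] at h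
        have := sq2_irr (p := a i j) (q := 1) (by push_cast; push_cast at h; linarith)
        omega
    · rw [if_neg h]
      have hb0 : b i j = 0 := by
        rcases hclass i j with h0 | ⟨ha0, hb⟩
        · exact h0
        · exfalso; apply h
          rcases hb with h1 | h1
          · left; rw [hab, ha0, h1]; push_cast; ring
          · right; rw [hab, ha0, h1]; push_cast; ring
      simp [hsdef, hb0]
  have hclosed := closed_par A s hss hsd hP hcyc
  -- the key entrywise property, abstracted over the sign function
  have hkey_of : ∀ ε : Fin n → ℝ, (∀ i, ε i = 1 ∨ ε i = -1) →
      (∀ i j, A i j ≠ 0 → ((s i j = 0 ∧ ε i * ε j = 1) ∨ (s i j = 1 ∧ ε i * ε j = -1))) →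
      ∀ i j, σA i j = ε i * A i j * ε j := by
    intro ε hεpm hεs i j
    by_cases hA0 : A i j = 0
    · have h00 := sq2_irr (p := a i j) (q := b i j) (by rw [← hab]; exact hA0)
      rw [hσA_apply, hA0, h00.1, h00.2]
      push_cast; ring
    · rcases hclass i j with hb0 | ⟨ha0, hb⟩
      · -- integer entry
        have hs0 : s i j = 0 := by simp [hsdef, hb0]
        have hεε : ε i * ε j = 1 := by
          rcases hεs i j hA0 with ⟨_, h⟩ | ⟨hc, _⟩
          · exact h
          · rw [hs0] at hc; exact absurd hc (by decide)
        rw [hσA_apply, hab, hb0]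
        push_cast
        calc (a i j : ℝ) - 0 * Real.sqrt 2 = ((a i j : ℝ) + 0 * Real.sqrt 2) * (ε i * ε j) := by
              rw [hεε]; ring
          _ = ε i * ((a i j : ℝ) + 0 * Real.sqrt 2) * ε j := by ring
      · -- sqrt2 entry
        have hs1 : s i j = 1 := by
          simp only [hsdef]
          rw [if_neg]
          rcases hb with h1 | h1 <;> omega
        have hεε : ε i * ε j = -1 := by
          rcases hεs i j hA0 with ⟨hc, _⟩ | ⟨_, h⟩
          · rw [hs1] at hc; exact absurd hc (by decide)
          · exact h
        rw [hσA_apply, hab, ha0]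
        push_cast
        calc (0:ℝ) - (b i j : ℝ) * Real.sqrt 2
            = ((0:ℝ) + (b i j : ℝ) * Real.sqrt 2) * (ε i * ε j) := by rw [hεε]; ring
          _ = ε i * ((0:ℝ) + (b i j : ℝ) * Real.sqrt 2) * ε j := by ring
  -- produce ε
  have main : ∃ ε : Fin n → ℝ, (∀ i, ε i = 1 ∨ ε i = -1) ∧ ∀ i j, σA i j = ε i * A i j * ε j := by
    rcases Nat.eq_zero_or_pos n with hn | hn
    · subst hn
      exact ⟨fun _ => 1, fun i => i.elim0, fun i => i.elim0⟩
    set i₀ : Fin n := ⟨0, hn⟩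
    have hconnN : ∀ j : Fin n, ∃ (k : ℕ) (c : ℕ → Fin n), c 0 = i₀ ∧ c k = j ∧
        ∀ l < k, A (c l) (c (l+1)) ≠ 0 := by
      intro j
      obtain ⟨k, cF, hh1, hh2, hh3⟩ := hconn i₀ j
      refine ⟨k, fun m => cF ⟨min m k, by omega⟩, ?_, ?_, ?_⟩
      · show cF ⟨min 0 k, by omega⟩ = i₀
        rw [show (⟨min 0 k, by omega⟩ : Fin (k+1)) = 0 from by ext; simp]
        exact hh1
      · show cF ⟨min k k, by omega⟩ = j
        rw [show (⟨min k k, by omega⟩ : Fin (k+1)) = Fin.last k from by ext; simp]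
        exact hh2
      · intro l hl
        show A (cF ⟨min l k, by omega⟩) (cF ⟨min (l+1) k, by omega⟩) ≠ 0
        have e1 : (⟨min l k, by omega⟩ : Fin (k+1)) = (⟨l, hl⟩ : Fin k).castSucc := by
          ext; simp; omega
        have e2 : (⟨min (l+1) k, by omega⟩ : Fin (k+1)) = (⟨l, hl⟩ : Fin k).succ := by
          ext; simp; omega
        rw [e1, e2]
        exact hh3 ⟨l, hl⟩
    choose K C hC0 hCk hCadj using hconnN
    set f : Fin n → ZMod 2 := fun j => ∑ l ∈ Finset.range (K j), s (C j l) (C j (l+1)) with hf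
    have hedge : ∀ i j, A i j ≠ 0 → f j = f i + s i j := by
      intro i j hAij
      set T := K i + 1 + K j with hT
      set w : ℕ → Fin n := fun m => if m ≤ K i then C i m else C j (T - m) with hw
      have hwlow : ∀ m ≤ K i, w m = C i m := fun m hm => by simp [hw, hm]
      have hwhigh : ∀ m, K i < m → w m = C j (T - m) := fun m hm => by
        simp [hw, Nat.not_le.mpr hm]
      have hw0 : w 0 = i₀ := by rw [hwlow 0 (by omega), hC0]
      have hwT : w T = i₀ := by
        rw [hwhigh T (by omega), Nat.sub_self, hC0]
      have hadjw : ∀ l < T, A (w l) (w (l+1)) ≠ 0 := by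
        intro l hl
        rcases Nat.lt_or_ge l (K i) with h | h
        · rw [hwlow l (by omega), hwlow (l+1) (by omega)]
          exact hCadj i l h
        rcases Nat.eq_or_lt_of_le h with h' | h'
        · rw [hwlow l (by omega), hwhigh (l+1) (by omega)]
          rw [show T - (l+1) = K j from by omega, ← h', hCk i, hCk j]
          exact hAij
        · rw [hwhigh l (by omega), hwhigh (l+1) (by omega)]
          have hm : T - (l+1) < K j := by omega
          rw [show T - l = (T - (l+1)) + 1 from by omega]
          rw [hA_symm]
          exact hCadj j _ hm
      have hclosedw := hclosed T w (by rw [hw0, hwT]) hadjw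
      have hsplit : ∑ l ∈ Finset.range T, s (w l) (w (l+1)) = f i + (s i j + f j) := by
        rw [Finset.range_eq_Ico,
          ← Finset.sum_Ico_consecutive _ (by omega : 0 ≤ K i) (by omega : K i ≤ T),
          ← Finset.sum_Ico_consecutive _ (by omega : K i ≤ K i + 1) (by omega : K i + 1 ≤ T)]
        congr 1
        · rw [← Finset.range_eq_Ico]
          apply Finset.sum_congr rfl
          intro l hl
          simp only [Finset.mem_range] at hl
          rw [hwlow l (by omega), hwlow (l+1) (by omega)]
        congr 1
        · rw [Finset.sum_Ico_eq_sum_range]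
          rw [show K i + 1 - K i = 1 from by omega, Finset.sum_range_one]
          rw [hwlow (K i + 0) (by omega), hwhigh (K i + 0 + 1) (by omega)]
          rw [show K i + 0 = K i from by omega, show T - (K i + 1) = K j from by omega,
            hCk i, hCk j]
        · rw [Finset.sum_Ico_eq_sum_range, show T - (K i + 1) = K j from by omega]
          have step1 : ∀ m ∈ Finset.range (K j),
              s (w (K i + 1 + m)) (w (K i + 1 + m + 1)) =
              s (C j (K j - 1 - m + 1)) (C j (K j - 1 - m)) := by
            intro m hm
            simp only [Finset.mem_range] at hm
            rw [hwhigh (K i + 1 + m) (by omega), hwhigh (K i + 1 + m + 1) (by omega)]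
            rw [show T - (K i + 1 + m) = K j - 1 - m + 1 from by omega,
              show T - (K i + 1 + m + 1) = K j - 1 - m from by omega]
          rw [Finset.sum_congr rfl step1]
          rw [Finset.sum_range_reflect (fun m => s (C j (m + 1)) (C j m)) (K j)]
          apply Finset.sum_congr rfl
          intro m _
          rw [hss]
      rw [hsplit] at hclosedw
      calc f j = 0 + f j := (zero_add _).symm
        _ = (f i + (s i j + f j)) + f j := by rw [← hclosedw]
        _ = f i + s i j + (f j + f j) := by ring
        _ = f i + s i j := by rw [h2, add_zero]
    refine ⟨fun i => if f i = 0 then 1 else -1, fun i => by by_cases h : f i = 0 <;> simp [h], ?_⟩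
    apply hkey_of _ (fun i => by by_cases h : f i = 0 <;> simp [h])
    intro i j hA0
    have hfe := hedge i j hA0
    have hs01 : s i j = 0 ∨ s i j = 1 := by
      simp only [hsdef]
      by_cases hb0 : b i j = 0 <;> simp [hb0]
    have hf01 : ∀ x : ZMod 2, x = 0 ∨ x = 1 := by decide
    rcases hs01 with hs' | hs'
    · left
      refine ⟨hs', ?_⟩
      rw [hs', add_zero] at hfe
      rw [hfe]
      by_cases h : f i = 0 <;> simp [h]
    · right
      refine ⟨hs', ?_⟩
      rw [hs'] at hfe
      by_cases h : f i = 0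
      · rw [h, zero_add] at hfe
        simp [h, hfe]
      · have h1 : f i = 1 := (hf01 (f i)).resolve_left h
        rw [h1] at hfe
        have : f j = 0 := by rw [hfe]; decide
        simp [h, this]
  obtain ⟨ε, hεpm, hkey⟩ := main
  have hDAD : σA = Matrix.diagonal ε * A * Matrix.diagonal ε := by
    ext i j
    rw [Matrix.mul_diagonal, Matrix.diagonal_mul]
    exact hkey i j
  constructor
  · refine ⟨ε, 1, hεpm, ?_⟩
    have hP1 : (Matrix.of fun i j : Fin n => if (1 : Equiv.Perm (Fin n)) i = j then (1:ℝ) else 0)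
        = 1 := by
      ext i j
      simp [Matrix.one_apply, Equiv.Perm.coe_one]
      exact if_congr Iff.rfl rfl rfl
    rw [hP1, mul_one]
    rw [Matrix.diagonal_transpose]
    exact hDAD
  · -- charpoly part
    have hcharm : Matrix.charmatrix σA =
        (Matrix.diagonal fun i => Polynomial.C (ε i)) * Matrix.charmatrix A *
        (Matrix.diagonal fun i => Polynomial.C (ε i)) := by
      refine Matrix.ext fun i j => ?_
      rw [Matrix.mul_diagonal, Matrix.diagonal_mul, Matrix.charmatrix_apply,
        Matrix.charmatrix_apply]
      rw [hkey i j, _root_.map_mul, _root_.map_mul]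
      by_cases hij : i = j
      · subst hij
        rw [Matrix.diagonal_apply_eq]
        have hC1 : Polynomial.C (ε i) * Polynomial.C (ε i) = 1 := by
          rw [← _root_.map_mul]
          rcases hεpm i with h | h <;> rw [h] <;> norm_num
        linear_combination (-Polynomial.X : Polynomial ℝ) * hC1
      · rw [Matrix.diagonal_apply_ne _ hij]
        ring
    have hcp_eq : σA.charpoly = A.charpoly := by
      rw [Matrix.charpoly, Matrix.charpoly, hcharm, Matrix.det_mul, Matrix.det_mul]
      have hdet : (Matrix.diagonal fun i => Polynomial.C (ε i)).det *
          (Matrix.diagonal fun i => Polynomial.C (ε i)).det = 1 := by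
        rw [Matrix.det_diagonal, ← Finset.prod_mul_distrib]
        rw [Finset.prod_congr rfl (fun i _ => by
          rw [← _root_.map_mul]
          rcases hεpm i with h | h <;> rw [h] <;> norm_num :
          ∀ i ∈ Finset.univ, Polynomial.C (ε i) * Polynomial.C (ε i) = 1)]
        exact Finset.prod_const_one
      linear_combination (Matrix.charmatrix A).det * hdet
    set B : Matrix (Fin n) (Fin n) (ℤ√2) := Matrix.of (fun i j => (⟨a i j, b i j⟩ : ℤ√2))
      with hB
    have h02 : (0:ℤ) ≤ 2 := by norm_num
    set f2 : ℤ√2 →+* ℝ := Zsqrtd.toReal h02 with hf2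
    have hf2app : ∀ z : ℤ√2, f2 z = (z.re : ℝ) + (z.im : ℝ) * Real.sqrt 2 := by
      intro z
      rw [hf2, Zsqrtd.toReal_apply]
      norm_num
    set g2 : ℤ√2 →+* ℝ := f2.comp (starRingEnd (ℤ√2)) with hg2
    have hg2app : ∀ z : ℤ√2, g2 z = (z.re : ℝ) - (z.im : ℝ) * Real.sqrt 2 := by
      intro z
      rw [hg2, RingHom.comp_apply, hf2app]
      rw [show (starRingEnd (ℤ√2)) z = star z from rfl]
      rw [Zsqrtd.re_star, Zsqrtd.im_star]
      push_cast
      ring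
    have hAmap : A = B.map f2 := by
      ext i j
      rw [Matrix.map_apply, hB, Matrix.of_apply, hf2app, hab]
    have hσmap : σA = B.map g2 := by
      ext i j
      rw [Matrix.map_apply, hB, Matrix.of_apply, hg2app, hσA_apply]
    intro k
    have e1 : A.charpoly.coeff k = f2 (B.charpoly.coeff k) := by
      rw [hAmap, Matrix.charpoly_map, Polynomial.coeff_map]
    have e2 : σA.charpoly.coeff k = g2 (B.charpoly.coeff k) := by
      rw [hσmap, Matrix.charpoly_map, Polynomial.coeff_map]
    set z := B.charpoly.coeff k with hz
    have e3 : f2 z = g2 z := by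
      rw [← e1, ← e2, hcp_eq]
    rw [hf2app, hg2app] at e3
    have him : (z.im : ℝ) = 0 := by
      have : (z.im : ℝ) * Real.sqrt 2 = 0 := by linarith
      rcases mul_eq_zero.mp this with h | h
      · exact h
      · exact absurd h (ne_of_gt hs2pos)
    refine ⟨z.re, ?_⟩
    rw [e1, hf2app, him]
    ring
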